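/- Let d, m ∈ ℕ, ξ ∈ ℝ^d, p ∈ [1,∞), c, C, T ∈ [0,∞), B ∈ ℝ^{d×m}, let (Ω, F, P) be a probability space, let W : [0,T] × Ω → ℝ^m be a standard Brownian motion, let μ : ℝ^d → ℝ^d be measurable with ‖μ(x)‖ ≤ C + c‖x‖ for all x ∈ ℝ^d, let χ : [0,T] → [0,T] be measurable with χ(t) ≤ t for all t, and let X : [0,T] × Ω → ℝ^d be a continuous stochastic process satisfying X_t = ξ + ∫_0^t μ(X_{χ(s)}) ds + B W_t almost surely for each t ∈ [0,T]. Then sup_{t∈[0,T]} (E[‖X_t‖^p])^(1/p) ≤ (‖ξ‖ + C T + (E[‖B W_T‖^p])^(1/p)) e^{cT}. -/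

import Mathlib

open MeasureTheory ProbabilityTheory
open scoped ENNReal NNReal

private lemma aux_rpow_split {p : ℝ} (hp : 1 < p) (x : ℝ≥0∞) : x ^ p = x * x ^ (p - 1) := by
  rcases eq_or_ne x 0 with rfl | hx0
  · rw [ENNReal.zero_rpow_of_pos (by linarith), ENNReal.zero_rpow_of_pos (by linarith), mul_zero]
  rcases eq_or_ne x ⊤ with rfl | hxt
  · rw [ENNReal.top_rpow_of_pos (by linarith), ENNReal.top_rpow_of_pos (by linarith),
      ENNReal.top_mul_top]
  · nth_rewrite 2 [← ENNReal.rpow_one x]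
    rw [← ENNReal.rpow_add _ _ hx0 hxt]
    ring_nf

lemma aux_minkowski {α Ω : Type*} [MeasurableSpace α] [MeasurableSpace Ω]
    (ν : Measure α) (P : Measure Ω) [SigmaFinite ν] [SigmaFinite P]
    {p : ℝ} (hp : 1 ≤ p) (H : α → Ω → ℝ≥0∞)
    (hH : Measurable (Function.uncurry H))
    (hfin : ∫⁻ ω, (∫⁻ a, H a ω ∂ν) ^ p ∂P ≠ ⊤) :
    (∫⁻ ω, (∫⁻ a, H a ω ∂ν) ^ p ∂P) ^ (1 / p)
      ≤ ∫⁻ a, (∫⁻ ω, (H a ω) ^ p ∂P) ^ (1 / p) ∂ν := by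
  have hswap : ∀ K : α → Ω → ℝ≥0∞, Measurable (Function.uncurry K) →
      ∫⁻ ω, (∫⁻ a, K a ω ∂ν) ∂P = ∫⁻ a, (∫⁻ ω, K a ω ∂P) ∂ν := by
    intro K hK
    exact lintegral_lintegral_swap (μ := P) (ν := ν) (f := fun ω a => K a ω)
      ((hK.comp measurable_swap).aemeasurable)
  rcases eq_or_lt_of_le hp with rfl | hp1
  · simp only [one_div, inv_one, ENNReal.rpow_one]
    exact le_of_eq (hswap H hH)
  set q : ℝ := p / (p - 1) with hq
  have hpq : p.HolderConjugate q := Real.HolderConjugate.conjExponent hp1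
  set G : Ω → ℝ≥0∞ := fun ω => ∫⁻ a, H a ω ∂ν with hG
  have hGmeas : Measurable G := Measurable.lintegral_prod_left hH
  set X : ℝ≥0∞ := ∫⁻ ω, G ω ^ p ∂P with hX
  rcases eq_or_ne X 0 with hX0 | hX0
  · rw [hX0, ENNReal.zero_rpow_of_pos (by positivity)]
    exact zero_le
  have hXt : X ≠ ⊤ := hfin
  set R : ℝ≥0∞ := ∫⁻ a, (∫⁻ ω, (H a ω) ^ p ∂P) ^ (1 / p) ∂ν with hR
  have hsec : ∀ ω, Measurable (fun a => H a ω) := fun ω =>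
    hH.comp measurable_prodMk_right
  have hsec' : ∀ a, Measurable (fun ω => H a ω) := fun a =>
    hH.comp measurable_prodMk_left
  have hq0 : 0 < q := hpq.symm.pos
  have hXqt : X ^ (1 / q) ≠ ⊤ := ENNReal.rpow_ne_top_of_nonneg (by positivity) hXt
  have hXq0 : X ^ (1 / q) ≠ 0 := by
    simp [ENNReal.rpow_eq_zero_iff, hX0, hXt]
  have hpow : ∀ x : ℝ≥0∞, (x ^ (p - 1)) ^ q = x ^ p := by
    intro x
    rw [← ENNReal.rpow_mul]
    congr 1
    rw [hq, mul_div_cancel₀ _ (sub_ne_zero.mpr hp1.ne')]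
  have key : X ≤ R * X ^ (1 / q) := by
    have h1 : X = ∫⁻ a, (∫⁻ ω, H a ω * G ω ^ (p - 1) ∂P) ∂ν := by
      have e1 : X = ∫⁻ ω, (∫⁻ a, H a ω * G ω ^ (p - 1) ∂ν) ∂P := by
        rw [hX]
        congr 1; funext ω
        rw [lintegral_mul_const'' _ (hsec ω).aemeasurable]
        exact aux_rpow_split hp1 _
      rw [e1]
      exact hswap _ (hH.mul ((hGmeas.comp measurable_snd).pow_const _))
    calc X = ∫⁻ a, (∫⁻ ω, H a ω * G ω ^ (p - 1) ∂P) ∂ν := h1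
      _ ≤ ∫⁻ a, (∫⁻ ω, H a ω ^ p ∂P) ^ (1 / p) * X ^ (1 / q) ∂ν := by
          refine lintegral_mono fun a => ?_
          have hold := ENNReal.lintegral_mul_le_Lp_mul_Lq P hpq (hsec' a).aemeasurable
            ((hGmeas.pow_const (p - 1)).aemeasurable)
          simp only [Pi.mul_apply, hpow] at hold
          exact hold
      _ = R * X ^ (1 / q) := lintegral_mul_const' _ _ hXqt
  have hsplit : X ^ (1 / p) * X ^ (1 / q) = X := by
    rw [← ENNReal.rpow_add _ _ hX0 hXt, one_div, one_div, hpq.inv_add_inv_eq_one,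
      ENNReal.rpow_one]
  have : X ^ (1 / p) * X ^ (1 / q) ≤ R * X ^ (1 / q) := by rw [hsplit]; exact key
  exact (ENNReal.mul_le_mul_iff_left hXq0 hXqt).mp this

lemma aux_gronwall {F : ℝ → ℝ} (hmono : Monotone F) {a c T : ℝ}
    (ha : 0 ≤ a) (hc : 0 ≤ c) (hT : 0 ≤ T)
    (hkey : ∀ t ∈ Set.Icc (0:ℝ) T, F t ≤ a + c * ∫ s in (0:ℝ)..t, F s) :
    ∀ t ∈ Set.Icc (0:ℝ) T, F t ≤ a * Real.exp (c * t) := by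
  have hFint : ∀ u v : ℝ, IntervalIntegrable F volume u v := fun u v =>
    hmono.intervalIntegrable
  set φ : ℝ → ℝ := fun t => a + c * ∫ s in (0:ℝ)..t, F s with hφ
  have hφcont : Continuous φ := by
    refine continuous_const.add (continuous_const.mul ?_)
    exact intervalIntegral.continuous_primitive (fun u v => hFint u v) 0
  have hφint : ∀ u v : ℝ, IntervalIntegrable φ volume u v := fun u v =>
    hφcont.intervalIntegrable u v
  set ψ : ℝ → ℝ := fun t => a + c * ∫ s in (0:ℝ)..t, φ s with hψ
  have hψ' : ∀ t : ℝ, HasDerivAt ψ (c * φ t) t := by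
    intro t
    have h1 : HasDerivAt (fun u => ∫ s in (0:ℝ)..u, φ s) (φ t) t :=
      intervalIntegral.integral_hasDerivAt_right (hφint 0 t)
        hφcont.stronglyMeasurable.stronglyMeasurableAtFilter
        hφcont.continuousAt
    simpa [hψ] using (h1.const_mul c).const_add a
  have hFφ : ∀ t ∈ Set.Icc (0:ℝ) T, F t ≤ φ t := hkey
  have hφψ : ∀ t ∈ Set.Icc (0:ℝ) T, φ t ≤ ψ t := by
    intro t ht
    refine add_le_add_right (mul_le_mul_of_nonneg_left ?_ hc) a
    refine intervalIntegral.integral_mono_on ht.1 (hFint 0 t) (hφint 0 t) ?_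
    intro s hs
    exact hFφ s ⟨hs.1, hs.2.trans ht.2⟩
  have hψbound := le_gronwallBound_of_liminf_deriv_right_le (f := ψ)
    (f' := fun t => c * φ t) (δ := a) (K := c) (ε := 0) (a := 0) (b := T)
    (fun t _ => (hψ' t).continuousAt.continuousWithinAt)
    (fun x _ r hr => ((hψ' x).hasDerivWithinAt (s := Set.Ici x)).liminf_right_slope_le hr)
    (by simp [hψ, intervalIntegral.integral_same])
    (fun x hx => by
      have h := mul_le_mul_of_nonneg_left (hφψ x ⟨hx.1, hx.2.le⟩) hc
      simpa using h)
  intro t ht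
  have h := hψbound t ht
  rw [sub_zero, gronwallBound_ε0] at h
  exact (hFφ t ht).trans ((hφψ t ht).trans h)

/-- A standard Brownian motion with values in `ℝ^m` on the time interval `[0,T]`. -/
structure IsStdBrownianMotion {Ω : Type*} [MeasurableSpace Ω] (P : Measure Ω)
    (m : ℕ) (T : ℝ) (W : ℝ → Ω → (Fin m → ℝ)) : Prop where
  measurable : ∀ t, Measurable (W t)
  init : ∀ ω, W 0 ω = 0
  cont : ∀ ω, ContinuousOn (fun t => W t ω) (Set.Icc 0 T)
  incr_gaussian : ∀ s t : ℝ, 0 ≤ s → s ≤ t → t ≤ T → ∀ i : Fin m,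
    P.map (fun ω => W t ω i - W s ω i) = gaussianReal 0 (Real.toNNReal (t - s))
  indep_incr : ∀ (n : ℕ) (τ : ℕ → ℝ), Monotone τ → (∀ k, τ k ∈ Set.Icc (0:ℝ) T) →
    iIndepFun
      (fun q : Fin n × Fin m => fun ω => W (τ (q.1 + 1)) ω q.2 - W (τ q.1) ω q.2) P

lemma aux_law_pi {Ω : Type*} [MeasurableSpace Ω] (P : Measure Ω) [IsProbabilityMeasure P]
    (m : ℕ) (T : ℝ) (W : ℝ → Ω → (Fin m → ℝ)) (hW : IsStdBrownianMotion P m T W)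
    {r : ℝ} (hr : r ∈ Set.Icc (0:ℝ) T) :
    P.map (fun ω => W r ω) = Measure.pi (fun _ : Fin m => gaussianReal 0 r.toNNReal) := by
  have hmarg : ∀ i, P.map (fun ω => W r ω i) = gaussianReal 0 r.toNNReal := by
    intro i
    have h := hW.incr_gaussian 0 r le_rfl hr.1 hr.2 i
    simpa [hW.init, sub_zero] using h
  have hτmono : Monotone (fun k : ℕ => if k = 0 then (0:ℝ) else r) := by
    intro k l hkl
    by_cases hk : k = 0
    · by_cases hl : l = 0 <;> simp [hk, hl, hr.1]
    · have hl : l ≠ 0 := by omega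
      simp [hk, hl]
  have hτmem : ∀ k, (if k = 0 then (0:ℝ) else r) ∈ Set.Icc (0:ℝ) T := by
    intro k
    by_cases hk : k = 0 <;> simp [hk, hr.1, hr.2, le_trans hr.1 hr.2]
  have h := hW.indep_incr 1 (fun k => if k = 0 then 0 else r) hτmono hτmem
  have heq : (fun q : Fin 1 × Fin m => fun ω =>
        W (if ((q.1 : ℕ) + 1) = 0 then (0:ℝ) else r) ω q.2
          - W (if (q.1 : ℕ) = 0 then (0:ℝ) else r) ω q.2)
      = fun q : Fin 1 × Fin m => fun ω => W r ω q.2 := by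
    funext q ω
    have h1 : (q.1 : ℕ) = 0 := by omega
    simp [h1, hW.init]
  rw [heq] at h
  refine (Measure.pi_eq ?_).symm
  intro s hs
  rw [Measure.map_apply (hW.measurable r) (MeasurableSet.univ_pi hs)]
  have hpre : (fun ω => W r ω) ⁻¹' (Set.univ.pi s)
      = ⋂ q : Fin 1 × Fin m, (fun ω => W r ω q.2) ⁻¹' s q.2 := by
    ext ω
    simp only [Set.mem_preimage, Set.mem_univ_pi, Set.mem_iInter]
    exact ⟨fun hh q => hh q.2, fun hh i => hh (0, i)⟩
  rw [hpre, h.meas_iInter (fun q => ⟨s q.2, hs q.2, rfl⟩)]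
  rw [Fintype.prod_prod_type]
  rw [Fin.prod_univ_one]
  congr 1
  funext i
  have hmeasi : Measurable (fun ω => W r ω i) := (measurable_pi_apply i).comp (hW.measurable r)
  show P ((fun ω => W r ω i) ⁻¹' s i) = _
  rw [← hmarg i, Measure.map_apply hmeasi (hs i)]

lemma aux_bw_mono {Ω : Type*} [MeasurableSpace Ω] (P : Measure Ω) [IsProbabilityMeasure P]
    (m : ℕ) (T : ℝ) (W : ℝ → Ω → (Fin m → ℝ)) (hW : IsStdBrownianMotion P m T W)
    {t : ℝ} (ht : t ∈ Set.Icc (0:ℝ) T) (f : (Fin m → ℝ) → ℝ≥0∞) (hf : Measurable f)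
    (hhomog : ∀ a : ℝ, 0 ≤ a → a ≤ 1 → ∀ x, f (fun i => a * x i) ≤ f x) :
    ∫⁻ ω, f (W t ω) ∂P ≤ ∫⁻ ω, f (W T ω) ∂P := by
  have hT0 : (0:ℝ) ≤ T := ht.1.trans ht.2
  rcases eq_or_lt_of_le hT0 with hT | hT
  · have htT : t = T := le_antisymm ht.2 (hT ▸ ht.1)
    rw [htT]
  set a : ℝ := Real.sqrt (t / T) with ha
  have ha0 : 0 ≤ a := Real.sqrt_nonneg _
  have ha1 : a ≤ 1 := by
    rw [ha, show (1:ℝ) = Real.sqrt 1 by simp]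
    exact Real.sqrt_le_sqrt (by rw [div_le_one hT]; exact ht.2)
  have hsc : Measurable (fun x : Fin m → ℝ => fun i => a * x i) :=
    measurable_pi_lambda _ (fun i => by fun_prop)
  have hvar : (NNReal.mk (a^2) (sq_nonneg a) * T.toNNReal : ℝ≥0) = t.toNNReal := by
    have h2 : a^2 * T = t := by
      rw [ha, Real.sq_sqrt (div_nonneg ht.1 hT0), div_mul_cancel₀ _ (ne_of_gt hT)]
    rw [← NNReal.coe_inj]
    push_cast [Real.coe_toNNReal _ hT0, Real.coe_toNNReal _ ht.1]
    exact h2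
  have hscale : Measure.pi (fun _ : Fin m => gaussianReal 0 t.toNNReal)
      = (Measure.pi (fun _ : Fin m => gaussianReal 0 T.toNNReal)).map
          (fun x => fun i => a * x i) := by
    refine Measure.pi_eq ?_
    intro s hs
    rw [Measure.map_apply hsc (MeasurableSet.univ_pi hs)]
    have hpre : (fun x : Fin m → ℝ => fun i => a * x i) ⁻¹' (Set.univ.pi s)
        = Set.univ.pi (fun i => (fun y => a * y) ⁻¹' s i) := by
      ext x
      simp [Set.mem_univ_pi]
    rw [hpre, Measure.pi_pi]
    congr 1
    funext i
    have hmul : Measurable (fun y : ℝ => a * y) := measurable_id'.const_mul a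
    rw [← Measure.map_apply hmul (hs i)]
    rw [show (fun y : ℝ => a * y) = (a * ·) from rfl, gaussianReal_map_const_mul a]
    rw [mul_zero, ← hvar]
  calc ∫⁻ ω, f (W t ω) ∂P
      = ∫⁻ x, f x ∂(P.map (fun ω => W t ω)) := by
        rw [lintegral_map hf (hW.measurable t)]
    _ = ∫⁻ x, f x ∂(Measure.pi (fun _ : Fin m => gaussianReal 0 t.toNNReal)) := by
        rw [aux_law_pi P m T W hW ht]
    _ = ∫⁻ x, f (fun i => a * x i)
          ∂(Measure.pi (fun _ : Fin m => gaussianReal 0 T.toNNReal)) := by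
        rw [hscale, lintegral_map hf hsc]
    _ ≤ ∫⁻ x, f x ∂(Measure.pi (fun _ : Fin m => gaussianReal 0 T.toNNReal)) :=
        lintegral_mono (fun x => hhomog a ha0 ha1 x)
    _ = ∫⁻ ω, f (W T ω) ∂P := by
        rw [← aux_law_pi P m T W hW (Set.right_mem_Icc.mpr hT0), lintegral_map hf
          (hW.measurable T)]

/-- A priori `L^p` bound for solutions of SDEs with linearly growing drift, additive
noise, and a time-discretization function `χ` with `χ(t) ≤ t` (Lemma 4.1):
`sup_{t∈[0,T]} (E[‖X_t‖^p])^(1/p) ≤ (‖ξ‖ + C T + (E[‖B W_T‖^p])^(1/p)) e^{cT}`. -/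
theorem sde_apriori_lp_bound {Ω : Type*} [MeasurableSpace Ω] (P : Measure Ω)
    [IsProbabilityMeasure P] (d m : ℕ) (ξ : EuclideanSpace ℝ (Fin d))
    (p : ℝ) (hp : 1 ≤ p) (c C T : ℝ) (hc : 0 ≤ c) (hC : 0 ≤ C) (hT : 0 ≤ T)
    (B : Matrix (Fin d) (Fin m) ℝ) (W : ℝ → Ω → (Fin m → ℝ))
    (hW : IsStdBrownianMotion P m T W)
    (μd : EuclideanSpace ℝ (Fin d) → EuclideanSpace ℝ (Fin d)) (hμmeas : Measurable μd)
    (hμgrowth : ∀ x, ‖μd x‖ ≤ C + c * ‖x‖)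
    (χ : ℝ → ℝ) (hχmeas : Measurable χ)
    (hχ : ∀ t ∈ Set.Icc (0:ℝ) T, χ t ∈ Set.Icc (0:ℝ) t)
    (X : ℝ → Ω → EuclideanSpace ℝ (Fin d))
    (hXmeas : ∀ t, Measurable (X t))
    (hXcont : ∀ ω, ContinuousOn (fun t => X t ω) (Set.Icc 0 T))
    (hX : ∀ t ∈ Set.Icc (0:ℝ) T, ∀ᵐ ω ∂P,
      X t ω = ξ + (∫ s in (0:ℝ)..t, μd (X (χ s) ω))
        + (EuclideanSpace.equiv (Fin d) ℝ).symm (B.mulVec (W t ω))) :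
    ∀ t ∈ Set.Icc (0:ℝ) T,
      (∫⁻ ω, (‖X t ω‖₊ : ℝ≥0∞) ^ p ∂P) ^ (1 / p)
        ≤ (ENNReal.ofReal ‖ξ‖ + ENNReal.ofReal (C * T) +
            (∫⁻ ω, (‖(EuclideanSpace.equiv (Fin d) ℝ).symm (B.mulVec (W T ω))‖₊ : ℝ≥0∞) ^ p ∂P)
              ^ (1 / p)) * ENNReal.ofReal (Real.exp (c * T)) := by
  intro t₀ ht₀
  have hp0 : (0:ℝ) < p := lt_of_lt_of_le one_pos hp
  have hp0' : p ≠ 0 := ne_of_gt hp0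
  have h1p : (0:ℝ) < 1/p := by positivity
  have hcollapse : ∀ x : ℝ≥0∞, (x ^ p) ^ (1/p) = x := fun x => by
    rw [← ENNReal.rpow_mul, mul_one_div_cancel hp0', ENNReal.rpow_one]
  set bWT : ℝ≥0∞ :=
    ∫⁻ ω, (‖(EuclideanSpace.equiv (Fin d) ℝ).symm (B.mulVec (W T ω))‖₊ : ℝ≥0∞) ^ p ∂P
    with hbWT
  -- measurability of the noise functional
  have hBcont : Continuous (fun v : Fin m → ℝ =>
      (EuclideanSpace.equiv (Fin d) ℝ).symm (B.mulVec v)) := by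
    have h1 : Continuous (fun v : Fin m → ℝ => B.mulVec v) := by
      have := B.mulVecLin.continuous_of_finiteDimensional
      simpa [Matrix.coe_mulVecLin] using this
    exact ((EuclideanSpace.equiv (Fin d) ℝ).symm.continuous).comp h1
  have hbw_meas : Measurable (fun v : Fin m → ℝ =>
      (‖(EuclideanSpace.equiv (Fin d) ℝ).symm (B.mulVec v)‖₊ : ℝ≥0∞) ^ p) :=
    (hBcont.measurable.nnnorm.coe_nnreal_ennreal).pow_const p
  by_cases hfin : bWT = ⊤
  · have h1 : bWT ^ (1/p) = ⊤ := by rw [hfin]; exact ENNReal.top_rpow_of_pos h1p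
    have h2 : (ENNReal.ofReal ‖ξ‖ + ENNReal.ofReal (C * T) + bWT ^ (1/p))
        * ENNReal.ofReal (Real.exp (c * T)) = ⊤ := by
      rw [h1, add_top, ENNReal.top_mul]
      exact (ENNReal.ofReal_pos.mpr (Real.exp_pos _)).ne'
    rw [h2]
    exact le_top
  -- clamped process
  set clamp : ℝ → ℝ := fun u => max 0 (min u T) with hclamp
  have hclamp_mem : ∀ u, clamp u ∈ Set.Icc (0:ℝ) T := fun u =>
    ⟨le_max_left _ _, max_le hT (min_le_right u T)⟩
  have hclamp_eq : ∀ u ∈ Set.Icc (0:ℝ) T, clamp u = u := by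
    intro u hu
    rw [hclamp]
    simp only
    rw [min_eq_left hu.2, max_eq_right hu.1]
  have hclamp_cont : Continuous clamp := continuous_const.max (continuous_id.min continuous_const)
  set Y : ℝ → Ω → EuclideanSpace ℝ (Fin d) := fun u ω => X (clamp u) ω with hYdef
  have hYmeas : ∀ u, Measurable (Y u) := fun u => hXmeas _
  have hYcont : ∀ ω, Continuous fun u => Y u ω := fun ω =>
    (hXcont ω).comp_continuous hclamp_cont hclamp_mem
  have hYX : ∀ u ∈ Set.Icc (0:ℝ) T, ∀ ω, Y u ω = X u ω := by
    intro u hu ω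
    rw [hYdef]
    simp only
    rw [hclamp_eq u hu]
  have hYunc : Measurable (Function.uncurry Y) :=
    measurable_uncurry_of_continuous_of_measurable hYcont hYmeas
  -- truncation sets
  set On : ℕ → Set Ω :=
    fun n => ⋂ u : ℚ, {ω | (u:ℝ) ∈ Set.Icc (0:ℝ) T → ‖X (u:ℝ) ω‖ ≤ (n:ℝ)} with hOn
  have hOn_meas : ∀ n, MeasurableSet (On n) := by
    intro n
    refine MeasurableSet.iInter fun u => ?_
    by_cases h : (u:ℝ) ∈ Set.Icc (0:ℝ) T
    · simp only [h, forall_true_left]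
      exact measurableSet_le (hXmeas _).norm measurable_const
    · simp only [h, false_implies]
      exact MeasurableSet.univ
  have hreal_le : ∀ {x y : ℝ}, (∀ ε : ℝ, 0 < ε → x ≤ y + ε) → x ≤ y := by
    intro x y h
    by_contra hxy
    push_neg at hxy
    have := h ((x - y)/2) (by linarith)
    linarith
  have hOn_spec : ∀ n ω, ω ∈ On n → ∀ u ∈ Set.Icc (0:ℝ) T, ‖X u ω‖ ≤ (n:ℝ) := by
    intro n ω hω u hu
    have hωQ : ∀ v : ℚ, (v:ℝ) ∈ Set.Icc (0:ℝ) T → ‖X (v:ℝ) ω‖ ≤ (n:ℝ) := by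
      intro v hv
      exact (Set.mem_iInter.mp hω v) hv
    have hcont : Continuous fun v => ‖Y v ω‖ := (hYcont ω).norm
    refine hreal_le fun ε hε => ?_
    obtain ⟨δ, hδ0, hδ⟩ := Metric.continuous_iff.mp hcont u ε hε
    -- find a rational point in [0,T] within δ of u
    have hfound : ∃ v : ℚ, (v:ℝ) ∈ Set.Icc (0:ℝ) T ∧ |(v:ℝ) - u| < δ := by
      rcases lt_or_ge u T with huT | huT
      · obtain ⟨v, hv1, hv2⟩ := exists_rat_btwn (show u < min T (u + δ) from
          lt_min huT (by linarith))
        refine ⟨v, ⟨hu.1.trans hv1.le, (hv2.trans_le (min_le_left _ _)).le⟩, ?_⟩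
        have hv3 : (v:ℝ) < u + δ := hv2.trans_le (min_le_right _ _)
        rw [abs_lt]
        constructor <;> linarith
      · have huT' : u = T := le_antisymm hu.2 huT
        by_cases h0 : 0 < u
        · obtain ⟨v, hv1, hv2⟩ := exists_rat_btwn (show max 0 (u - δ) < u from
            max_lt h0 (by linarith))
          have hv3 : u - δ < (v:ℝ) := (le_max_right 0 (u - δ)).trans_lt hv1
          refine ⟨v, ⟨((le_max_left 0 (u - δ)).trans_lt hv1).le, hv2.le.trans hu.2⟩, ?_⟩
          rw [abs_lt]
          constructor <;> linarith
        · have hu0 : u = 0 := le_antisymm (not_lt.mp h0) hu.1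
          refine ⟨0, by simpa [hu0] using hu, ?_⟩
          simp [hu0, hδ0]
    obtain ⟨v, hvIcc, hvδ⟩ := hfound
    have h1 : ‖X (v:ℝ) ω‖ ≤ (n:ℝ) := hωQ v hvIcc
    have h2 : dist (‖Y (v:ℝ) ω‖) (‖Y u ω‖) < ε := hδ _ (by rwa [Real.dist_eq])
    rw [Real.dist_eq, abs_lt] at h2
    have h3 : ‖Y (v:ℝ) ω‖ = ‖X (v:ℝ) ω‖ := by rw [hYX _ hvIcc ω]
    have h4 : ‖Y u ω‖ = ‖X u ω‖ := by rw [hYX _ hu ω]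
    linarith [h2.1, h2.2]
  have hOn_mono : Monotone On := by
    refine monotone_nat_of_le_succ fun n => ?_
    intro ω hω
    refine Set.mem_iInter.mpr fun u => ?_
    intro hu
    have := (Set.mem_iInter.mp hω u) hu
    push_cast
    push_cast at this
    linarith
  have hOn_cover : ∀ ω, ∃ n : ℕ, ω ∈ On n := by
    intro ω
    obtain ⟨R, hR⟩ := isCompact_Icc.exists_bound_of_continuousOn (hXcont ω)
    refine ⟨⌈R⌉₊, Set.mem_iInter.mpr fun u hu => ?_⟩
    exact (hR _ hu).trans (Nat.le_ceil R)
  -- truncated processes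
  set ind : ℕ → Ω → ℝ≥0∞ := fun n => (On n).indicator (fun _ => 1) with hind
  have hind_meas : ∀ n, Measurable (ind n) := fun n =>
    measurable_const.indicator (hOn_meas n)
  have hind_le_one : ∀ n ω, ind n ω ≤ 1 := by
    intro n ω
    rw [hind]
    by_cases hω : ω ∈ On n <;> simp [Set.indicator, hω]
  set q : ℕ → ℝ → Ω → ℝ≥0∞ := fun n u ω => ind n ω * (‖X u ω‖₊ : ℝ≥0∞) with hq
  set g : ℕ → ℝ → ℝ≥0∞ := fun n u => (∫⁻ ω, q n u ω ^ p ∂P) ^ (1/p) with hg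
  have hq_meas : ∀ n u, Measurable (q n u) := fun n u =>
    (hind_meas n).mul ((hXmeas u).nnnorm.coe_nnreal_ennreal)
  have hnorm_le : ∀ (z : EuclideanSpace ℝ (Fin d)) (r : ℝ), ‖z‖ ≤ r →
      (‖z‖₊ : ℝ≥0∞) ≤ ENNReal.ofReal r := by
    intro z r hr
    rw [← enorm_eq_nnnorm, ← ofReal_norm]
    exact ENNReal.ofReal_le_ofReal hr
  have hq_le : ∀ n, ∀ u ∈ Set.Icc (0:ℝ) T, ∀ ω, q n u ω ≤ (n:ℝ≥0∞) := by
    intro n u hu ω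
    rw [hq]
    simp only
    by_cases hω : ω ∈ On n
    · rw [hind]
      simp only [Set.indicator_of_mem hω, one_mul]
      have := hnorm_le _ _ (hOn_spec n ω hω u hu)
      rwa [ENNReal.ofReal_natCast] at this
    · rw [hind]
      simp only [Set.indicator_of_notMem hω, zero_mul]
      exact zero_le
  have hg_le : ∀ n, ∀ u ∈ Set.Icc (0:ℝ) T, g n u ≤ (n:ℝ≥0∞) := by
    intro n u hu
    rw [hg]
    simp only
    have h1 : ∫⁻ ω, q n u ω ^ p ∂P ≤ (n:ℝ≥0∞) ^ p := by
      calc ∫⁻ ω, q n u ω ^ p ∂P ≤ ∫⁻ _, (n:ℝ≥0∞) ^ p ∂P :=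
            lintegral_mono fun ω => ENNReal.rpow_le_rpow (hq_le n u hu ω) hp0.le
        _ = (n:ℝ≥0∞) ^ p := by rw [lintegral_const, measure_univ, mul_one]
    calc (∫⁻ ω, q n u ω ^ p ∂P) ^ (1/p) ≤ ((n:ℝ≥0∞) ^ p) ^ (1/p) :=
          ENNReal.rpow_le_rpow h1 h1p.le
      _ = (n:ℝ≥0∞) := hcollapse _
  have hg_ne_top : ∀ n, ∀ u ∈ Set.Icc (0:ℝ) T, g n u ≠ ⊤ := fun n u hu =>
    ((hg_le n u hu).trans_lt (by simp)).ne
  -- running suprema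
  set F : ℕ → ℝ → ℝ := fun n s => sSup ((fun u => (g n u).toReal) '' Set.Icc 0 (clamp s))
    with hF
  have himg_ne : ∀ n s, ((fun u => (g n u).toReal) '' Set.Icc 0 (clamp s)).Nonempty :=
    fun n s => ⟨_, Set.mem_image_of_mem _ (Set.left_mem_Icc.mpr (hclamp_mem s).1)⟩
  have himg_bdd : ∀ n s, BddAbove ((fun u => (g n u).toReal) '' Set.Icc 0 (clamp s)) := by
    intro n s
    refine ⟨(n:ℝ), ?_⟩
    rintro x ⟨u, hu, rfl⟩
    have huT : u ∈ Set.Icc (0:ℝ) T := ⟨hu.1, hu.2.trans (hclamp_mem s).2⟩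
    have h := hg_le n u huT
    have h2 := ENNReal.toReal_mono (by simp) h
    simpa using h2
  have hclamp_mono : Monotone clamp := by
    intro s s' hss'
    exact max_le_max le_rfl (min_le_min hss' le_rfl)
  have hF_mono : ∀ n, Monotone (F n) := by
    intro n s s' hss'
    exact csSup_le_csSup (himg_bdd n s') (himg_ne n s)
      (Set.image_mono (Set.Icc_subset_Icc le_rfl (hclamp_mono hss')))
  have hF_nonneg : ∀ n s, 0 ≤ F n s := by
    intro n s
    have hmem : (g n 0).toReal ∈ (fun u => (g n u).toReal) '' Set.Icc 0 (clamp s) :=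
      Set.mem_image_of_mem _ (Set.left_mem_Icc.mpr (hclamp_mem s).1)
    exact le_trans ENNReal.toReal_nonneg (le_csSup (himg_bdd n s) hmem)
  have hgF : ∀ n, ∀ s ∈ Set.Icc (0:ℝ) T, ∀ u ∈ Set.Icc 0 s, (g n u).toReal ≤ F n s := by
    intro n s hs u hu
    refine le_csSup (himg_bdd n s) ?_
    refine Set.mem_image_of_mem _ ?_
    rwa [hclamp_eq s hs]
  -- the noise L^p bound
  have hBW : ∀ r ∈ Set.Icc (0:ℝ) T,
      (∫⁻ ω, (‖(EuclideanSpace.equiv (Fin d) ℝ).symm (B.mulVec (W r ω))‖₊ : ℝ≥0∞) ^ p ∂P)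
        ≤ bWT := by
    intro r hr
    rw [hbWT]
    refine aux_bw_mono P m T W hW hr _ hbw_meas ?_
    intro a ha0 ha1 x
    have hsm : (fun i => a * x i) = a • x := rfl
    rw [hsm, Matrix.mulVec_smul, (EuclideanSpace.equiv (Fin d) ℝ).symm.map_smul,
      nnnorm_smul, ENNReal.coe_mul,
      ENNReal.mul_rpow_of_nonneg _ _ hp0.le]
    have h1 : ((‖a‖₊ : ℝ≥0∞)) ^ p ≤ 1 := by
      refine ENNReal.rpow_le_one ?_ hp0.le
      rw [show ((1:ℝ≥0∞)) = ((1:ℝ≥0) : ℝ≥0∞) from rfl, ENNReal.coe_le_coe]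
      rw [← NNReal.coe_le_coe]
      simpa [Real.norm_eq_abs, abs_of_nonneg ha0] using ha1
    exact mul_le_of_le_one_left zero_le h1
  -- constants
  set An : ℝ≥0∞ := ENNReal.ofReal ‖ξ‖ + ENNReal.ofReal (C * T) + bWT ^ (1/p) with hAn
  have hAn_ne : An ≠ ⊤ := by
    rw [hAn]
    refine ENNReal.add_ne_top.mpr ⟨ENNReal.add_ne_top.mpr ⟨ENNReal.ofReal_ne_top,
      ENNReal.ofReal_ne_top⟩, ?_⟩
    exact ENNReal.rpow_ne_top_of_nonneg h1p.le hfin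
  set aR : ℝ := An.toReal with haR
  have haR0 : 0 ≤ aR := ENNReal.toReal_nonneg
  have hAofReal : An = ENNReal.ofReal aR := (ENNReal.ofReal_toReal hAn_ne).symm
  -- the key estimate
  have claim : ∀ n : ℕ, ∀ t ∈ Set.Icc (0:ℝ) T,
      g n t ≤ An + ENNReal.ofReal c * ENNReal.ofReal (∫ s in (0:ℝ)..t, F n s) := by
    intro n t ht
    have htIcc : Set.Ioc (0:ℝ) t ⊆ Set.Icc (0:ℝ) T := fun s hs => ⟨hs.1.le, hs.2.trans ht.2⟩
    have hχmem : ∀ s ∈ Set.Ioc (0:ℝ) t, χ s ∈ Set.Icc (0:ℝ) T := by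
      intro s hs
      have h := hχ s (htIcc hs)
      exact ⟨h.1, h.2.trans (htIcc hs).2⟩
    set Jn : ℝ → Ω → ℝ≥0∞ := fun s ω => ind n ω * (‖Y (χ s) ω‖₊ : ℝ≥0∞) with hJn
    have hJn_unc : Measurable (Function.uncurry Jn) := by
      have h1 : Measurable fun x : ℝ × Ω => Y (χ x.1) x.2 :=
        hYunc.comp ((hχmeas.comp measurable_fst).prodMk measurable_snd)
      exact ((hind_meas n).comp measurable_snd).mul (h1.nnnorm.coe_nnreal_ennreal)
    set In : Ω → ℝ≥0∞ := fun ω => ∫⁻ s in Set.Ioc (0:ℝ) t, Jn s ω ∂volume with hIn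
    have hIn_meas : Measurable In := Measurable.lintegral_prod_left hJn_unc
    have hJn_le : ∀ s ∈ Set.Ioc (0:ℝ) t, ∀ ω, Jn s ω ≤ (n:ℝ≥0∞) := by
      intro s hs ω
      rw [hJn]
      simp only
      by_cases hω : ω ∈ On n
      · rw [hind]
        simp only [Set.indicator_of_mem hω, one_mul]
        have hx : ‖Y (χ s) ω‖ ≤ (n:ℝ) := by
          rw [hYX _ (hχmem s hs) ω]
          exact hOn_spec n ω hω _ (hχmem s hs)
        have := hnorm_le _ _ hx
        rwa [ENNReal.ofReal_natCast] at this
      · rw [hind]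
        simp only [Set.indicator_of_notMem hω, zero_mul]
        exact zero_le
    have hIn_le : ∀ ω, In ω ≤ (n:ℝ≥0∞) * ENNReal.ofReal t := by
      intro ω
      rw [hIn]
      simp only
      calc ∫⁻ s in Set.Ioc (0:ℝ) t, Jn s ω ∂volume
          ≤ ∫⁻ _ in Set.Ioc (0:ℝ) t, (n:ℝ≥0∞) ∂volume :=
            setLIntegral_mono measurable_const (fun s hs => hJn_le s hs ω)
        _ = (n:ℝ≥0∞) * ENNReal.ofReal t := by
            rw [setLIntegral_const, Real.volume_Ioc, sub_zero]
    set N2 : Ω → ℝ≥0∞ :=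
      fun ω => (‖(EuclideanSpace.equiv (Fin d) ℝ).symm (B.mulVec (W t ω))‖₊ : ℝ≥0∞) with hN2
    have hN2_meas : Measurable N2 :=
      (hBcont.measurable.comp (hW.measurable t)).nnnorm.coe_nnreal_ennreal
    -- pointwise a.e. bound
    have hae : ∀ᵐ ω ∂P, q n t ω ≤ ENNReal.ofReal (‖ξ‖ + C*t) + N2 ω
        + ENNReal.ofReal c * In ω := by
      filter_upwards [hX t ht] with ω hXω
      by_cases hω : ω ∈ On n
      swap
      · rw [hq]
        simp only
        rw [hind]
        simp only [Set.indicator_of_notMem hω, zero_mul]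
        exact zero_le
      · have hind1 : ind n ω = 1 := by rw [hind]; simp [Set.indicator_of_mem hω]
        have hXb : ∀ s ∈ Set.Ioc (0:ℝ) t, ‖X (χ s) ω‖ ≤ (n:ℝ) :=
          fun s hs => hOn_spec n ω hω _ (hχmem s hs)
        have hYXχ : ∀ s ∈ Set.Ioc (0:ℝ) t, Y (χ s) ω = X (χ s) ω :=
          fun s hs => hYX _ (hχmem s hs) ω
        have hmeasYχ : Measurable fun s => ‖Y (χ s) ω‖ :=
          ((hYcont ω).measurable.comp hχmeas).norm
        have hYnint : IntervalIntegrable (fun s => ‖Y (χ s) ω‖) volume 0 t := by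
          rw [intervalIntegrable_iff_integrableOn_Ioc_of_le ht.1]
          refine Integrable.mono' (integrable_const ((n:ℝ))) hmeasYχ.aestronglyMeasurable ?_
          refine (ae_restrict_iff' measurableSet_Ioc).mpr (Filter.Eventually.of_forall ?_)
          intro s hs
          rw [Real.norm_eq_abs, abs_of_nonneg (norm_nonneg _), hYX _ (hχmem s hs) ω]
          exact hXb s hs
        have hgint : IntervalIntegrable (fun s => C + c * ‖Y (χ s) ω‖) volume 0 t :=
          intervalIntegrable_const.add (hYnint.const_mul c)
        have hint_le : ‖∫ s in (0:ℝ)..t, μd (X (χ s) ω)‖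
            ≤ ∫ s in (0:ℝ)..t, (C + c * ‖Y (χ s) ω‖) := by
          have hbd : ∀ᵐ s ∂volume.restrict (Set.uIoc (0:ℝ) t),
              ‖μd (X (χ s) ω)‖ ≤ C + c * ‖Y (χ s) ω‖ := by
            rw [Set.uIoc_of_le ht.1]
            refine (ae_restrict_iff' measurableSet_Ioc).mpr (Filter.Eventually.of_forall ?_)
            intro s hs
            rw [hYXχ s hs]
            exact hμgrowth _
          have h := intervalIntegral.norm_integral_le_abs_of_norm_le hbd hgint
          rwa [abs_of_nonneg (intervalIntegral.integral_nonneg ht.1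
            (fun s _ => by positivity))] at h
        have hsplit : ∫ s in (0:ℝ)..t, (C + c * ‖Y (χ s) ω‖)
            = C * t + c * ∫ s in (0:ℝ)..t, ‖Y (χ s) ω‖ := by
          rw [intervalIntegral.integral_add intervalIntegrable_const (hYnint.const_mul c),
            intervalIntegral.integral_const, intervalIntegral.integral_const_mul,
            sub_zero, smul_eq_mul, mul_comm]
        have hreal : ‖X t ω‖ ≤ (‖ξ‖ + C*t)
            + ‖(EuclideanSpace.equiv (Fin d) ℝ).symm (B.mulVec (W t ω))‖
            + c * ∫ s in (0:ℝ)..t, ‖Y (χ s) ω‖ := by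
          have h3 : ‖X t ω‖ ≤ ‖ξ‖ + ‖∫ s in (0:ℝ)..t, μd (X (χ s) ω)‖
              + ‖(EuclideanSpace.equiv (Fin d) ℝ).symm (B.mulVec (W t ω))‖ := by
            rw [hXω]
            exact norm_add₃_le
          have h4 := hint_le.trans_eq hsplit
          linarith
        have hq_eq : q n t ω = ENNReal.ofReal ‖X t ω‖ := by
          rw [hq]
          simp only
          rw [hind1, one_mul, ofReal_norm, enorm_eq_nnnorm]
        have hIn_eq : In ω = ENNReal.ofReal (∫ s in (0:ℝ)..t, ‖Y (χ s) ω‖) := by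
          have h5 : In ω = ∫⁻ s in Set.Ioc (0:ℝ) t, ENNReal.ofReal ‖Y (χ s) ω‖ ∂volume := by
            rw [hIn]
            simp only
            refine lintegral_congr fun s => ?_
            rw [hJn]
            simp only
            rw [hind1, one_mul]
            exact (ofReal_norm _).symm
          rw [h5, intervalIntegral.integral_of_le ht.1,
            ofReal_integral_eq_lintegral_ofReal
              ((intervalIntegrable_iff_integrableOn_Ioc_of_le ht.1).mp hYnint)
              (Filter.Eventually.of_forall fun s => norm_nonneg _)]
        rw [hq_eq, hIn_eq, hN2]
        simp only
        calc ENNReal.ofReal ‖X t ω‖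
            ≤ ENNReal.ofReal ((‖ξ‖ + C*t)
              + ‖(EuclideanSpace.equiv (Fin d) ℝ).symm (B.mulVec (W t ω))‖
              + c * ∫ s in (0:ℝ)..t, ‖Y (χ s) ω‖) := ENNReal.ofReal_le_ofReal hreal
          _ = _ := by
              rw [ENNReal.ofReal_add
                  (add_nonneg (add_nonneg (norm_nonneg _) (mul_nonneg hC ht.1)) (norm_nonneg _))
                  (mul_nonneg hc (intervalIntegral.integral_nonneg ht.1
                    fun s _ => norm_nonneg _)),
                ENNReal.ofReal_add (add_nonneg (norm_nonneg _) (mul_nonneg hC ht.1))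
                  (norm_nonneg _),
                ofReal_norm, enorm_eq_nnnorm, ENNReal.ofReal_mul hc]
    -- L^p triangle inequality
    have hconst : (∫⁻ _ : Ω, (ENNReal.ofReal (‖ξ‖ + C*t)) ^ p ∂P) ^ (1/p)
        = ENNReal.ofReal (‖ξ‖ + C*t) := by
      rw [lintegral_const, measure_univ, mul_one, hcollapse]
    have hu3 : (∫⁻ ω, (ENNReal.ofReal c * In ω) ^ p ∂P) ^ (1/p)
        = ENNReal.ofReal c * (∫⁻ ω, In ω ^ p ∂P) ^ (1/p) := by
      have h6 : ∀ ω, (ENNReal.ofReal c * In ω) ^ p = (ENNReal.ofReal c) ^ p * In ω ^ p :=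
        fun ω => ENNReal.mul_rpow_of_nonneg _ _ hp0.le
      simp_rw [h6]
      rw [lintegral_const_mul _ (hIn_meas.pow_const p),
        ENNReal.mul_rpow_of_nonneg _ _ h1p.le, hcollapse]
    have hTri : g n t ≤ ENNReal.ofReal (‖ξ‖ + C*t) + (∫⁻ ω, N2 ω ^ p ∂P) ^ (1/p)
        + ENNReal.ofReal c * (∫⁻ ω, In ω ^ p ∂P) ^ (1/p) := by
      set u1 : Ω → ℝ≥0∞ := fun _ => ENNReal.ofReal (‖ξ‖ + C*t) with hu1
      set u3f : Ω → ℝ≥0∞ := fun ω => ENNReal.ofReal c * In ω with hu3f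
      have hu1_meas : Measurable u1 := measurable_const
      have hu3f_meas : Measurable u3f := hIn_meas.const_mul _
      have hstep1 : g n t ≤ (∫⁻ ω, ((u1 + N2) + u3f) ω ^ p ∂P) ^ (1/p) := by
        rw [hg]
        simp only
        refine ENNReal.rpow_le_rpow (lintegral_mono_ae ?_) h1p.le
        filter_upwards [hae] with ω hω
        refine ENNReal.rpow_le_rpow ?_ hp0.le
        simpa [Pi.add_apply, hu1, hu3f] using hω
      have hstep2 := ENNReal.lintegral_Lp_add_le (μ := P)
        (hu1_meas.add hN2_meas).aemeasurable hu3f_meas.aemeasurable hp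
      have hstep3 := ENNReal.lintegral_Lp_add_le (μ := P)
        hu1_meas.aemeasurable hN2_meas.aemeasurable hp
      have hconst' : (∫⁻ a, u1 a ^ p ∂P) ^ (1/p) = ENNReal.ofReal (‖ξ‖ + C*t) := hconst
      rw [hconst'] at hstep3
      have hu3' : (∫⁻ a, u3f a ^ p ∂P) ^ (1/p)
          = ENNReal.ofReal c * (∫⁻ ω, In ω ^ p ∂P) ^ (1/p) := hu3
      refine hstep1.trans (hstep2.trans ?_)
      rw [hu3']
      exact add_le_add hstep3 le_rfl
    -- Minkowski's integral inequality
    have hIfin : ∫⁻ ω, In ω ^ p ∂P ≠ ⊤ := by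
      have h7 : ∫⁻ ω, In ω ^ p ∂P ≤ ((n:ℝ≥0∞) * ENNReal.ofReal t) ^ p := by
        calc ∫⁻ ω, In ω ^ p ∂P
            ≤ ∫⁻ _, ((n:ℝ≥0∞) * ENNReal.ofReal t) ^ p ∂P :=
              lintegral_mono fun ω => ENNReal.rpow_le_rpow (hIn_le ω) hp0.le
          _ = ((n:ℝ≥0∞) * ENNReal.ofReal t) ^ p := by
              rw [lintegral_const, measure_univ, mul_one]
      exact ne_top_of_le_ne_top (ENNReal.rpow_ne_top_of_nonneg hp0.le
        (ENNReal.mul_ne_top (ENNReal.natCast_ne_top n) ENNReal.ofReal_ne_top)) h7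
    have hmink := aux_minkowski (volume.restrict (Set.Ioc (0:ℝ) t)) P hp Jn hJn_unc hIfin
    have hstep4 : ∀ s ∈ Set.Ioc (0:ℝ) t,
        (∫⁻ ω, Jn s ω ^ p ∂P) ^ (1/p) ≤ ENNReal.ofReal (F n s) := by
      intro s hs
      have hgn : (∫⁻ ω, Jn s ω ^ p ∂P) ^ (1/p) = g n (χ s) := by
        rw [hg]
        simp only
        congr 1
        refine lintegral_congr fun ω => ?_
        rw [hJn, hq]
        simp only
        rw [hYX _ (hχmem s hs) ω]
      rw [hgn]
      have hχT : χ s ∈ Set.Icc (0:ℝ) T := hχmem s hs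
      have hχIcc : χ s ∈ Set.Icc (0:ℝ) s := hχ s (htIcc hs)
      rw [← ENNReal.ofReal_toReal (hg_ne_top n (χ s) hχT)]
      exact ENNReal.ofReal_le_ofReal (hgF n s (htIcc hs) (χ s) hχIcc)
    have hmink2 : (∫⁻ ω, In ω ^ p ∂P) ^ (1/p)
        ≤ ENNReal.ofReal (∫ s in (0:ℝ)..t, F n s) := by
      refine hmink.trans ?_
      calc ∫⁻ s in Set.Ioc (0:ℝ) t, (∫⁻ ω, Jn s ω ^ p ∂P) ^ (1/p) ∂volume
          ≤ ∫⁻ s in Set.Ioc (0:ℝ) t, ENNReal.ofReal (F n s) ∂volume :=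
            setLIntegral_mono ((hF_mono n).measurable.ennreal_ofReal) hstep4
        _ = ENNReal.ofReal (∫ s in (0:ℝ)..t, F n s) := by
            rw [intervalIntegral.integral_of_le ht.1]
            exact (ofReal_integral_eq_lintegral_ofReal
              ((hF_mono n).intervalIntegrable (a := 0) (b := t)).1
              (Filter.Eventually.of_forall fun s => hF_nonneg n s)).symm
    refine hTri.trans ?_
    refine add_le_add ?_ (mul_le_mul_right hmink2 _)
    rw [hAn]
    refine add_le_add ?_ ?_
    · rw [ENNReal.ofReal_add (norm_nonneg _) (mul_nonneg hC ht.1)]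
      exact add_le_add le_rfl (ENNReal.ofReal_le_ofReal (mul_le_mul_of_nonneg_left ht.2 hC))
    · exact ENNReal.rpow_le_rpow (hBW t ht) h1p.le
  -- Gronwall
  have hFkey : ∀ n, ∀ t ∈ Set.Icc (0:ℝ) T, F n t ≤ aR + c * ∫ s in (0:ℝ)..t, F n s := by
    intro n t ht
    have hint_nonneg : (0:ℝ) ≤ ∫ s in (0:ℝ)..t, F n s :=
      intervalIntegral.integral_nonneg ht.1 fun s _ => hF_nonneg n s
    refine csSup_le (himg_ne n t) ?_
    rintro x ⟨u, hu, rfl⟩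
    rw [hclamp_eq t ht] at hu
    have hut : u ∈ Set.Icc (0:ℝ) T := ⟨hu.1, hu.2.trans ht.2⟩
    have h1 := claim n u hut
    have h2 : ENNReal.ofReal (∫ s in (0:ℝ)..u, F n s)
        ≤ ENNReal.ofReal (∫ s in (0:ℝ)..t, F n s) := by
      refine ENNReal.ofReal_le_ofReal ?_
      refine intervalIntegral.integral_mono_interval le_rfl hu.1 hu.2 ?_
        ((hF_mono n).intervalIntegrable)
      exact Filter.Eventually.of_forall fun s => hF_nonneg n s
    have h3 : g n u ≤ ENNReal.ofReal (aR + c * ∫ s in (0:ℝ)..t, F n s) := by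
      calc g n u ≤ An + ENNReal.ofReal c * ENNReal.ofReal (∫ s in (0:ℝ)..u, F n s) := h1
        _ ≤ An + ENNReal.ofReal c * ENNReal.ofReal (∫ s in (0:ℝ)..t, F n s) :=
            add_le_add_right (mul_le_mul_right h2 _) _
        _ = ENNReal.ofReal aR + ENNReal.ofReal (c * ∫ s in (0:ℝ)..t, F n s) := by
            rw [hAofReal, ENNReal.ofReal_mul hc]
        _ = ENNReal.ofReal (aR + c * ∫ s in (0:ℝ)..t, F n s) :=
            (ENNReal.ofReal_add haR0 (mul_nonneg hc hint_nonneg)).symm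
    exact ENNReal.toReal_le_of_le_ofReal
      (add_nonneg haR0 (mul_nonneg hc hint_nonneg)) h3
  have hFbound : ∀ n, ∀ t ∈ Set.Icc (0:ℝ) T, F n t ≤ aR * Real.exp (c * t) :=
    fun n => aux_gronwall (hF_mono n) haR0 hc hT (hFkey n)
  have hgbound : ∀ n, g n t₀ ≤ An * ENNReal.ofReal (Real.exp (c * T)) := by
    intro n
    have h1 : (g n t₀).toReal ≤ F n t₀ := hgF n t₀ ht₀ t₀ ⟨ht₀.1, le_rfl⟩
    have h2 : F n t₀ ≤ aR * Real.exp (c * T) := by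
      refine (hFbound n t₀ ht₀).trans ?_
      exact mul_le_mul_of_nonneg_left
        (Real.exp_le_exp.mpr (mul_le_mul_of_nonneg_left ht₀.2 hc)) haR0
    calc g n t₀ = ENNReal.ofReal ((g n t₀).toReal) :=
          (ENNReal.ofReal_toReal (hg_ne_top n t₀ ht₀)).symm
      _ ≤ ENNReal.ofReal (aR * Real.exp (c * T)) :=
          ENNReal.ofReal_le_ofReal (h1.trans h2)
      _ = ENNReal.ofReal aR * ENNReal.ofReal (Real.exp (c * T)) :=
          ENNReal.ofReal_mul haR0
      _ = An * ENNReal.ofReal (Real.exp (c * T)) := by rw [← hAofReal]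
  -- monotone convergence
  have hq_mono : Monotone fun n => fun ω => q n t₀ ω ^ p := by
    intro n n' hnn' ω
    simp only
    refine ENNReal.rpow_le_rpow ?_ hp0.le
    rw [hq]
    simp only
    refine mul_le_mul_left ?_ _
    rw [hind]
    exact Set.indicator_le_indicator_of_subset (hOn_mono hnn') (fun _ => zero_le) ω
  have hMCT : ∫⁻ ω, (‖X t₀ ω‖₊ : ℝ≥0∞) ^ p ∂P = ⨆ n, ∫⁻ ω, q n t₀ ω ^ p ∂P := by
    rw [← lintegral_iSup (fun n => (hq_meas n t₀).pow_const p) hq_mono]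
    congr 1
    funext ω
    refine le_antisymm ?_ ?_
    · obtain ⟨N, hN⟩ := hOn_cover ω
      refine le_trans (le_of_eq ?_) (le_iSup (fun n => q n t₀ ω ^ p) N)
      rw [hq, hind]
      simp [Set.indicator_of_mem hN]
    · refine iSup_le fun n => ?_
      refine ENNReal.rpow_le_rpow ?_ hp0.le
      rw [hq]
      calc ind n ω * (‖X t₀ ω‖₊ : ℝ≥0∞) ≤ 1 * (‖X t₀ ω‖₊ : ℝ≥0∞) :=
            mul_le_mul_left (hind_le_one n ω) _
        _ = (‖X t₀ ω‖₊ : ℝ≥0∞) := one_mul _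
  have hfinal : ∀ n, ∫⁻ ω, q n t₀ ω ^ p ∂P
      ≤ (An * ENNReal.ofReal (Real.exp (c * T))) ^ p := by
    intro n
    have h1 := ENNReal.rpow_le_rpow (hgbound n) hp0.le
    rwa [hg, ← ENNReal.rpow_mul, one_div, inv_mul_cancel₀ hp0', ENNReal.rpow_one] at h1
  calc (∫⁻ ω, (‖X t₀ ω‖₊ : ℝ≥0∞) ^ p ∂P) ^ (1/p)
      = (⨆ n, ∫⁻ ω, q n t₀ ω ^ p ∂P) ^ (1/p) := by rw [hMCT]
    _ ≤ ((An * ENNReal.ofReal (Real.exp (c * T))) ^ p) ^ (1/p) :=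
        ENNReal.rpow_le_rpow (iSup_le hfinal) h1p.le
    _ = An * ENNReal.ofReal (Real.exp (c * T)) := hcollapse _
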